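/- Let x* ∈ ℝ_{>0}^n be a complex balanced steady state of a GLV system with stoichiometric subspace S. Then a point z ∈ ℝ_{>0}^n is a positive steady state of the GLV system if and only if log z - log x* ∈ S^⊥; moreover, every positive steady state is complex balanced. -/

import Mathlib

open scoped RealInnerProductSpace

theorem glv_steady_state_iff_and_cb {n m : ℕ}
    (y : Fin m → EuclideanSpace ℝ (Fin n))
    (E : Finset (Fin m × Fin m)) (hE : ∀ e ∈ E, e.1 ≠ e.2)
    (κ : Fin m × Fin m → ℝ) (hκ : ∀ e ∈ E, 0 < κ e)
    (S : Submodule ℝ (EuclideanSpace ℝ (Fin n)))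
    (hS : S = Submodule.span ℝ {v : EuclideanSpace ℝ (Fin n) | ∃ e ∈ E, v = y e.2 - y e.1})
    (f : EuclideanSpace ℝ (Fin n) → EuclideanSpace ℝ (Fin n))
    (hf : ∀ x, f x = ∑ e ∈ E, (κ e * ∏ k, x k ^ (y e.1 k)) • (y e.2 - y e.1))
    (xs : EuclideanSpace ℝ (Fin n)) (hxs : ∀ k, 0 < xs k)
    (hcb : ∀ i : Fin m,
      ∑ e ∈ E.filter (fun e => e.1 = i), κ e * ∏ k, xs k ^ (y i k) =
      ∑ e ∈ E.filter (fun e => e.2 = i), κ e * ∏ k, xs k ^ (y e.1 k)) :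
    ∀ z : EuclideanSpace ℝ (Fin n), (∀ k, 0 < z k) →
      (((∀ k, z k * f z k = 0) ↔
        (WithLp.toLp 2 (fun k => Real.log (z k) - Real.log (xs k)) : EuclideanSpace ℝ (Fin n)) ∈ Sᗮ) ∧
      ((∀ k, z k * f z k = 0) →
        ∀ i : Fin m,
          ∑ e ∈ E.filter (fun e => e.1 = i), κ e * ∏ k, z k ^ (y i k) =
          ∑ e ∈ E.filter (fun e => e.2 = i), κ e * ∏ k, z k ^ (y e.1 k))) := by
  intro z hz
  classical
  set μ : EuclideanSpace ℝ (Fin n) :=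
    WithLp.toLp 2 (fun k => Real.log (z k) - Real.log (xs k)) with hμ
  set θ : Fin m → ℝ := fun i => ∑ k, y i k * μ k with hθdef
  set b : Fin m × Fin m → ℝ := fun e => κ e * ∏ k, xs k ^ (y e.1 k) with hbdef
  have hxspow : ∀ i, 0 < ∏ k, xs k ^ (y i k) := fun i =>
    Finset.prod_pos fun k _ => Real.rpow_pos_of_pos (hxs k) _
  have hbpos : ∀ e ∈ E, 0 < b e := fun e he => mul_pos (hκ e he) (hxspow e.1)
  -- key product formula
  have hA : ∀ i, (∏ k, z k ^ (y i k)) = (∏ k, xs k ^ (y i k)) * Real.exp (θ i) := by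
    intro i
    have h1 : (∏ k, z k ^ (y i k)) = Real.exp (∑ k, Real.log (z k) * y i k) := by
      rw [Real.exp_sum]
      exact Finset.prod_congr rfl fun k _ => Real.rpow_def_of_pos (hz k) _
    have h2 : (∏ k, xs k ^ (y i k)) = Real.exp (∑ k, Real.log (xs k) * y i k) := by
      rw [Real.exp_sum]
      exact Finset.prod_congr rfl fun k _ => Real.rpow_def_of_pos (hxs k) _
    rw [h1, h2, ← Real.exp_add]
    congr 1
    rw [hθdef, ← Finset.sum_add_distrib]
    refine Finset.sum_congr rfl fun k _ => ?_
    simp only [hμ]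
    ring
  -- complex balance at xs, in terms of b
  have hBcb : ∀ i, (∑ e ∈ E.filter (fun e => e.1 = i), b e) =
      ∑ e ∈ E.filter (fun e => e.2 = i), b e := by
    intro i
    have h := hcb i
    rw [← h]
    refine Finset.sum_congr rfl fun e he => ?_
    obtain ⟨-, h1⟩ := Finset.mem_filter.mp he
    simp [hbdef, h1]
  -- edge-sum reshuffling
  have hC : ∀ w : Fin m → ℝ,
      (∑ e ∈ E, b e * w e.1) = ∑ e ∈ E, b e * w e.2 := by
    intro w
    rw [← Finset.sum_fiberwise E (fun e => e.1) (fun e => b e * w e.1),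
        ← Finset.sum_fiberwise E (fun e => e.2) (fun e => b e * w e.2)]
    refine Finset.sum_congr rfl fun i _ => ?_
    have l1 : (∑ e ∈ E.filter (fun e => e.1 = i), b e * w e.1)
        = w i * ∑ e ∈ E.filter (fun e => e.1 = i), b e := by
      rw [Finset.mul_sum]
      refine Finset.sum_congr rfl fun e he => ?_
      obtain ⟨-, h1⟩ := Finset.mem_filter.mp he
      rw [h1]; ring
    have l2 : (∑ e ∈ E.filter (fun e => e.2 = i), b e * w e.2)
        = w i * ∑ e ∈ E.filter (fun e => e.2 = i), b e := by
      rw [Finset.mul_sum]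
      refine Finset.sum_congr rfl fun e he => ?_
      obtain ⟨-, h1⟩ := Finset.mem_filter.mp he
      rw [h1]; ring
    rw [l1, l2, hBcb i]
  -- coordinates of f z
  have hfz : ∀ k, f z k = ∑ e ∈ E, (b e * Real.exp (θ e.1)) * (y e.2 k - y e.1 k) := by
    intro k
    rw [hf]
    have happ : (∑ e ∈ E, (κ e * ∏ k', z k' ^ (y e.1 k')) • (y e.2 - y e.1)) k
        = ∑ e ∈ E, (κ e * ∏ k', z k' ^ (y e.1 k')) * (y e.2 k - y e.1 k) := by
      rw [WithLp.ofLp_sum, Finset.sum_apply k E (fun e => (κ e * ∏ k', z k' ^ (y e.1 k')) • (y e.2 - y e.1))]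
      refine Finset.sum_congr rfl fun e _ => ?_
      simp [mul_sub]
    rw [happ]
    refine Finset.sum_congr rfl fun e he => ?_
    rw [hA e.1, hbdef]
    ring
  have hzero_iff : (∀ k, z k * f z k = 0) ↔ ∀ k, f z k = 0 := by
    constructor
    · intro h k
      rcases mul_eq_zero.mp (h k) with h' | h'
      · exact absurd h' (ne_of_gt (hz k))
      · exact h'
    · intro h k; rw [h k, mul_zero]
  -- inner product of generators with μ
  have hinner : ∀ e : Fin m × Fin m,
      ⟪(y e.2 - y e.1 : EuclideanSpace ℝ (Fin n)), μ⟫ = θ e.2 - θ e.1 := by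
    intro e
    rw [PiLp.inner_apply, hθdef, ← Finset.sum_sub_distrib]
    refine Finset.sum_congr rfl fun k _ => ?_
    simp [RCLike.inner_apply, sub_mul, mul_comm]
  -- steady state implies edge-wise constancy of θ
  have hθ_of_fzero : (∀ k, f z k = 0) → ∀ e ∈ E, θ e.1 = θ e.2 := by
    intro h0
    have hsum1 : (∑ e ∈ E, b e * Real.exp (θ e.1) * (θ e.2 - θ e.1)) = 0 := by
      have hrw : (∑ e ∈ E, b e * Real.exp (θ e.1) * (θ e.2 - θ e.1))
          = ∑ k, μ k * f z k := by
        have : ∀ e ∈ E, b e * Real.exp (θ e.1) * (θ e.2 - θ e.1)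
            = ∑ k, μ k * ((b e * Real.exp (θ e.1)) * (y e.2 k - y e.1 k)) := by
          intro e he
          have : θ e.2 - θ e.1 = ∑ k, (y e.2 k - y e.1 k) * μ k := by
            rw [hθdef, ← Finset.sum_sub_distrib]
            refine Finset.sum_congr rfl fun k _ => ?_
            ring
          rw [this, Finset.mul_sum]
          refine Finset.sum_congr rfl fun k _ => ?_
          ring
        rw [Finset.sum_congr rfl this, Finset.sum_comm]
        refine Finset.sum_congr rfl fun k _ => ?_
        rw [hfz k, Finset.mul_sum]
      rw [hrw]
      simp [h0]
    have hsum2 : (∑ e ∈ E, b e * Real.exp (θ e.1)) = ∑ e ∈ E, b e * Real.exp (θ e.2) :=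
      hC (fun i => Real.exp (θ i))
    have key : (∑ e ∈ E, b e * (Real.exp (θ e.2) - Real.exp (θ e.1)
        - Real.exp (θ e.1) * (θ e.2 - θ e.1))) = 0 := by
      have expand : (∑ e ∈ E, b e * (Real.exp (θ e.2) - Real.exp (θ e.1)
          - Real.exp (θ e.1) * (θ e.2 - θ e.1)))
          = (∑ e ∈ E, b e * Real.exp (θ e.2)) - (∑ e ∈ E, b e * Real.exp (θ e.1))
            - ∑ e ∈ E, b e * Real.exp (θ e.1) * (θ e.2 - θ e.1) := by
        rw [← Finset.sum_sub_distrib, ← Finset.sum_sub_distrib]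
        refine Finset.sum_congr rfl fun e _ => ?_
        ring
      rw [expand, hsum1, ← hsum2, sub_self, zero_sub, neg_zero]
    have hnn : ∀ e ∈ E, 0 ≤ b e * (Real.exp (θ e.2) - Real.exp (θ e.1)
        - Real.exp (θ e.1) * (θ e.2 - θ e.1)) := by
      intro e he
      have h1 : (θ e.2 - θ e.1) + 1 ≤ Real.exp (θ e.2 - θ e.1) :=
        Real.add_one_le_exp _
      have h2 : Real.exp (θ e.2) = Real.exp (θ e.1) * Real.exp (θ e.2 - θ e.1) := by
        rw [← Real.exp_add]; ring_nf
      have h3 := Real.exp_pos (θ e.1)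
      have h4 : 0 ≤ Real.exp (θ e.2) - Real.exp (θ e.1)
          - Real.exp (θ e.1) * (θ e.2 - θ e.1) := by
        nlinarith [mul_le_mul_of_nonneg_left h1 h3.le]
      exact mul_nonneg (hbpos e he).le h4
    have hterm := (Finset.sum_eq_zero_iff_of_nonneg hnn).mp key
    intro e he
    by_contra hne
    have hd : θ e.2 - θ e.1 ≠ 0 := sub_ne_zero.mpr (Ne.symm hne)
    have hstrict : (θ e.2 - θ e.1) + 1 < Real.exp (θ e.2 - θ e.1) :=
      Real.add_one_lt_exp hd
    have h2 : Real.exp (θ e.2) = Real.exp (θ e.1) * Real.exp (θ e.2 - θ e.1) := by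
      rw [← Real.exp_add]; ring_nf
    have h3 := Real.exp_pos (θ e.1)
    have hb := hbpos e he
    have ht := hterm e he
    have h4 : 0 < Real.exp (θ e.2) - Real.exp (θ e.1)
        - Real.exp (θ e.1) * (θ e.2 - θ e.1) := by
      nlinarith [mul_lt_mul_of_pos_left hstrict h3]
    nlinarith
  -- θ constancy iff μ ∈ Sᗮ
  have hθ_iff : (∀ e ∈ E, θ e.1 = θ e.2) ↔ μ ∈ Sᗮ := by
    constructor
    · intro hθe
      rw [Submodule.mem_orthogonal]
      intro u hu
      rw [hS] at hu
      induction hu using Submodule.span_induction with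
      | mem v hv =>
        obtain ⟨e, he, rfl⟩ := hv
        rw [hinner e, hθe e he, sub_self]
      | zero => exact inner_zero_left μ
      | add v w _ _ hv hw => rw [inner_add_left, hv, hw, add_zero]
      | smul c v _ hv => rw [real_inner_smul_left, hv, mul_zero]
    · intro hμS e he
      have hvS : (y e.2 - y e.1 : EuclideanSpace ℝ (Fin n)) ∈ S := by
        rw [hS]
        exact Submodule.subset_span ⟨e, he, rfl⟩
      have := (Submodule.mem_orthogonal S μ).mp hμS _ hvS
      rw [hinner e] at this
      linarith [sub_eq_zero.mp this]
  constructor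
  · rw [hzero_iff]
    constructor
    · intro h0; exact hθ_iff.mp (hθ_of_fzero h0)
    · intro hμS k
      have hθe := hθ_iff.mpr hμS
      rw [hfz k]
      have step : (∑ e ∈ E, (b e * Real.exp (θ e.1)) * (y e.2 k - y e.1 k))
          = (∑ e ∈ E, b e * (Real.exp (θ e.2) * y e.2 k))
            - ∑ e ∈ E, b e * (Real.exp (θ e.1) * y e.1 k) := by
        rw [← Finset.sum_sub_distrib]
        refine Finset.sum_congr rfl fun e he => ?_
        rw [hθe e he]
        ring
      rw [step, ← hC (fun i => Real.exp (θ i) * y i k), sub_self]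
  · intro hst i
    have hθe := hθ_of_fzero (hzero_iff.mp hst)
    have lhs : (∑ e ∈ E.filter (fun e => e.1 = i), κ e * ∏ k, z k ^ (y i k))
        = Real.exp (θ i) * ∑ e ∈ E.filter (fun e => e.1 = i), κ e * ∏ k, xs k ^ (y i k) := by
      rw [Finset.mul_sum]
      refine Finset.sum_congr rfl fun e _ => ?_
      rw [hA i]; ring
    have rhs : (∑ e ∈ E.filter (fun e => e.2 = i), κ e * ∏ k, z k ^ (y e.1 k))
        = Real.exp (θ i) * ∑ e ∈ E.filter (fun e => e.2 = i), κ e * ∏ k, xs k ^ (y e.1 k) := by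
      rw [Finset.mul_sum]
      refine Finset.sum_congr rfl fun e he => ?_
      obtain ⟨heE, h2⟩ := Finset.mem_filter.mp he
      rw [hA e.1, hθe e heE, h2]; ring
    rw [lhs, rhs, hcb i]
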